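/- arXiv:1211.0894 — 4 statements merged into one kernel-verified Lean document; each statement's English description precedes it below -/
import Mathlib

section
/- Maximum principle with mixed boundary conditions: Let λ > 0, T > 0, s ∈ C¹([0,T]) with s(t) > 0, and let u be continuous on D̄_T = {(x,t) : 0 ≤ x ≤ s(t), 0 ≤ t ≤ T}, with u_x, u_{xx} continuous for 0 < x ≤ s(t), 0 < t ≤ T, and u_t continuous for 0 < x < s(t), 0 < t < T. Suppose −u_t + u_{xx} − λu ≥ 0 on the interior and u_x(s(t),t) ≤ 0 for 0 ≤ t ≤ T. If M := max_{D̄_T} u > 0, then u attains its maximum M only at points of the parabolic boundary portion {(0,t) : t ∈ [0,T]} ∪ {(x,0) : x ∈ [0,s(0)]}. -/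
open Set Filter Metric Topology

/-- If `f` has derivative `d` at `a` and `f y ≤ f a` on a left interval, then `0 ≤ d`. -/
lemma aux_deriv_nonneg_of_left {f : ℝ → ℝ} {d a r : ℝ} (hr : 0 < r)
    (hd : HasDerivAt f d a) (h : ∀ y ∈ Set.Ioo (a - r) a, f y ≤ f a) : 0 ≤ d := by
  have hs := hasDerivAt_iff_tendsto_slope.1 hd
  have hs' : Tendsto (slope f a) (𝓝[<] a) (𝓝 d) :=
    hs.mono_left (nhdsWithin_mono _ fun y hy => ne_of_lt hy)
  refine ge_of_tendsto hs' ?_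
  filter_upwards [Ioo_mem_nhdsLT_of_mem
    (show a ∈ Set.Ioc (a - r) a from ⟨by linarith, le_refl a⟩)] with y hy
  rw [slope_def_field]
  exact div_nonneg_of_nonpos (by linarith [h y hy]) (by linarith [hy.2])

/-- If `f` has derivative `d` at `a` and `f y ≤ f a` on a right interval, then `d ≤ 0`. -/
lemma aux_deriv_nonpos_of_right {f : ℝ → ℝ} {d a r : ℝ} (hr : 0 < r)
    (hd : HasDerivAt f d a) (h : ∀ y ∈ Set.Ioo a (a + r), f y ≤ f a) : d ≤ 0 := by
  have hs := hasDerivAt_iff_tendsto_slope.1 hd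
  have hs' : Tendsto (slope f a) (𝓝[>] a) (𝓝 d) :=
    hs.mono_left (nhdsWithin_mono _ fun y hy => ne_of_gt hy)
  refine le_of_tendsto hs' ?_
  filter_upwards [Ioo_mem_nhdsGT_of_mem
    (show a ∈ Set.Ico a (a + r) from ⟨le_refl a, by linarith⟩)] with y hy
  rw [slope_def_field]
  exact div_nonpos_of_nonpos_of_nonneg (by linarith [h y hy]) (by linarith [hy.1])

/-- An eventual property on the left filter holds on an interval. -/
lemma aux_left_interval {a : ℝ} {P : ℝ → Prop} (h : ∀ᶠ y in 𝓝[<] a, P y) :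
    ∃ r > 0, ∀ y ∈ Set.Ioo (a - r) a, P y := by
  rcases mem_nhdsLT_iff_exists_Ioo_subset.1 h with ⟨l, hl, hsub⟩
  exact ⟨a - l, by simpa [sub_pos] using hl, fun y hy => hsub (by
    constructor <;> [linarith [hy.1]; exact hy.2])⟩

set_option maxHeartbeats 1000000 in
theorem stmt_5 (lam T M : ℝ) (s : ℝ → ℝ) (u ux uxx ut : ℝ → ℝ → ℝ)
    (hlam : 0 < lam) (hT : 0 < T)
    (hs : ContDiffOn ℝ 1 s (Set.Icc 0 T))
    (hspos : ∀ t ∈ Set.Icc (0:ℝ) T, 0 < s t)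
    (hu_cont : ContinuousOn (fun p : ℝ × ℝ => u p.1 p.2)
      {p : ℝ × ℝ | 0 ≤ p.1 ∧ p.1 ≤ s p.2 ∧ 0 ≤ p.2 ∧ p.2 ≤ T})
    (hux : ∀ t ∈ Set.Ioc (0:ℝ) T, ∀ x ∈ Set.Ioc (0:ℝ) (s t),
      HasDerivAt (fun y => u y t) (ux x t) x)
    (huxx : ∀ t ∈ Set.Ioc (0:ℝ) T, ∀ x ∈ Set.Ioc (0:ℝ) (s t),
      HasDerivAt (fun y => ux y t) (uxx x t) x)
    (hux_cont : ContinuousOn (fun p : ℝ × ℝ => ux p.1 p.2)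
      {p : ℝ × ℝ | 0 < p.1 ∧ p.1 ≤ s p.2 ∧ 0 < p.2 ∧ p.2 ≤ T})
    (huxx_cont : ContinuousOn (fun p : ℝ × ℝ => uxx p.1 p.2)
      {p : ℝ × ℝ | 0 < p.1 ∧ p.1 ≤ s p.2 ∧ 0 < p.2 ∧ p.2 ≤ T})
    (hut : ∀ t ∈ Set.Ioo (0:ℝ) T, ∀ x ∈ Set.Ioo (0:ℝ) (s t),
      HasDerivAt (fun τ => u x τ) (ut x t) t)
    (hut_cont : ContinuousOn (fun p : ℝ × ℝ => ut p.1 p.2)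
      {p : ℝ × ℝ | 0 < p.1 ∧ p.1 < s p.2 ∧ 0 < p.2 ∧ p.2 < T})
    (hineq : ∀ t ∈ Set.Ioo (0:ℝ) T, ∀ x ∈ Set.Ioo (0:ℝ) (s t),
      0 ≤ -ut x t + uxx x t - lam * u x t)
    (hNeu : ∀ t ∈ Set.Icc (0:ℝ) T, ux (s t) t ≤ 0)
    (hMub : ∀ x t : ℝ, 0 ≤ x → x ≤ s t → 0 ≤ t → t ≤ T → u x t ≤ M)
    (hMatt : ∃ x t : ℝ, 0 ≤ x ∧ x ≤ s t ∧ 0 ≤ t ∧ t ≤ T ∧ u x t = M)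
    (hMpos : 0 < M) :
    ∀ x t : ℝ, 0 ≤ x → x ≤ s t → 0 ≤ t → t ≤ T → u x t = M → x = 0 ∨ t = 0 := by
  intro x₀ t₀ hx0 hxs ht0 htT hM
  by_contra hcon
  push_neg at hcon
  obtain ⟨hx0', ht0'⟩ := hcon
  have hx0p : 0 < x₀ := lt_of_le_of_ne hx0 (Ne.symm hx0')
  have ht0p : 0 < t₀ := lt_of_le_of_ne ht0 (Ne.symm ht0')
  have hst0 : 0 < s t₀ := hspos t₀ ⟨ht0, htT⟩
  have hux_at : HasDerivAt (fun y => u y t₀) (ux x₀ t₀) x₀ :=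
    hux t₀ ⟨ht0p, htT⟩ x₀ ⟨hx0p, hxs⟩
  -- Step 1 : ux x₀ t₀ = 0
  have huxge : 0 ≤ ux x₀ t₀ := by
    apply aux_deriv_nonneg_of_left hx0p hux_at
    intro y hy
    rw [hM]
    exact hMub y t₀ (by linarith [hy.1]) (by linarith [hy.2]) ht0 htT
  have huxle : ux x₀ t₀ ≤ 0 := by
    rcases eq_or_lt_of_le hxs with heq | hlt
    · have h := hNeu t₀ ⟨ht0, htT⟩
      rw [← heq] at h
      exact h
    · apply aux_deriv_nonpos_of_right (show (0:ℝ) < s t₀ - x₀ by linarith) hux_at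
      intro y hy
      rw [hM]
      exact hMub y t₀ (by linarith [hy.1]) (by linarith [hy.2]) ht0 htT
  have hux0 : ux x₀ t₀ = 0 := le_antisymm huxle huxge
  -- Step 2 : uxx x₀ t₀ ≤ 0
  have huxx0 : uxx x₀ t₀ ≤ 0 := by
    by_contra hpos
    push_neg at hpos
    have huxx_at : HasDerivAt (fun y => ux y t₀) (uxx x₀ t₀) x₀ :=
      huxx t₀ ⟨ht0p, htT⟩ x₀ ⟨hx0p, hxs⟩
    have hslope := hasDerivAt_iff_tendsto_slope.1 huxx_at
    have hslope' : Tendsto (slope (fun y => ux y t₀) x₀) (𝓝[<] x₀) (𝓝 (uxx x₀ t₀)) :=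
      hslope.mono_left (nhdsWithin_mono _ fun y hy => ne_of_lt hy)
    have hev : ∀ᶠ y in 𝓝[<] x₀, ux y t₀ < 0 := by
      filter_upwards [hslope'.eventually (eventually_gt_nhds hpos), self_mem_nhdsWithin]
        with y h1 h2
      rw [slope_def_field, hux0, sub_zero] at h1
      rcases div_pos_iff.1 h1 with ⟨_, h⟩ | ⟨h, _⟩
      · exact absurd h (by simp only [mem_Iio] at h2; linarith)
      · exact h
    obtain ⟨r, hr, hneg⟩ := aux_left_interval hev
    set c : ℝ := x₀ - min r x₀ / 2 with hc
    have hrr : 0 < min r x₀ := lt_min hr hx0p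
    have hcx : c < x₀ := by simp only [hc]; linarith
    have hcpos : 0 < c := by
      have : min r x₀ ≤ x₀ := min_le_right _ _
      simp only [hc]; linarith
    have hmem : ∀ y ∈ Icc c x₀, y ∈ Set.Ioc (0:ℝ) (s t₀) := fun y hy =>
      ⟨lt_of_lt_of_le hcpos hy.1, le_trans hy.2 hxs⟩
    have hanti : StrictAntiOn (fun y => u y t₀) (Icc c x₀) := by
      apply strictAntiOn_of_deriv_neg (convex_Icc c x₀)
      · intro y hy
        exact (hux t₀ ⟨ht0p, htT⟩ y (hmem y hy)).continuousAt.continuousWithinAt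
      · intro y hy
        rw [interior_Icc] at hy
        rw [(hux t₀ ⟨ht0p, htT⟩ y (hmem y ⟨hy.1.le, hy.2.le⟩)).deriv]
        apply hneg y
        constructor
        · have : min r x₀ ≤ r := min_le_left _ _
          simp only [hc] at hy; linarith [hy.1]
        · exact hy.2
    have hlt := hanti ⟨le_refl c, hcx.le⟩ ⟨hcx.le, le_refl x₀⟩ hcx
    simp only [hM] at hlt
    exact absurd (hMub c t₀ hcpos.le (by linarith) ht0 htT) (by linarith)
  -- Step 3 : local Lipschitz bound for s near t₀
  have ht₀Icc : t₀ ∈ Set.Icc (0:ℝ) T := ⟨ht0, htT⟩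
  obtain ⟨K, tset, htset, hlip⟩ :=
    (hs t₀ ht₀Icc).exists_lipschitzOnWith (convex_Icc (0:ℝ) T)
  obtain ⟨ε₀, hε₀, hball0⟩ := Metric.mem_nhdsWithin_iff.1 htset
  obtain ⟨L, hLdef⟩ : ∃ L : ℝ, L = (K : ℝ) + 1 := ⟨_, rfl⟩
  have hK0 : (0:ℝ) ≤ K := K.coe_nonneg
  have hL : 0 < L := by rw [hLdef]; linarith
  have hL1 : 1 ≤ L := by rw [hLdef]; linarith
  have ht₀tset : t₀ ∈ tset := mem_of_mem_nhdsWithin ht₀Icc htset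
  -- Step 4 : neighborhoods where uxx < lam*M/2 and u > 3M/4
  have hP₀S2 : ((x₀, t₀) : ℝ × ℝ) ∈
      {p : ℝ × ℝ | 0 < p.1 ∧ p.1 ≤ s p.2 ∧ 0 < p.2 ∧ p.2 ≤ T} := ⟨hx0p, hxs, ht0p, htT⟩
  have hP₀S1 : ((x₀, t₀) : ℝ × ℝ) ∈
      {p : ℝ × ℝ | 0 ≤ p.1 ∧ p.1 ≤ s p.2 ∧ 0 ≤ p.2 ∧ p.2 ≤ T} := ⟨hx0, hxs, ht0, htT⟩
  have hc2 : ∀ᶠ p in 𝓝[{p : ℝ × ℝ | 0 < p.1 ∧ p.1 ≤ s p.2 ∧ 0 < p.2 ∧ p.2 ≤ T}] (x₀, t₀),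
      uxx p.1 p.2 < lam * M / 2 :=
    (huxx_cont (x₀, t₀) hP₀S2).eventually (eventually_lt_nhds
      (show uxx x₀ t₀ < lam * M / 2 from lt_of_le_of_lt huxx0 (by positivity)))
  obtain ⟨ε₂, hε₂, hball2⟩ := Metric.mem_nhdsWithin_iff.1 hc2
  have hc1 : ∀ᶠ p in 𝓝[{p : ℝ × ℝ | 0 ≤ p.1 ∧ p.1 ≤ s p.2 ∧ 0 ≤ p.2 ∧ p.2 ≤ T}] (x₀, t₀),
      3 * M / 4 < u p.1 p.2 :=
    (hu_cont (x₀, t₀) hP₀S1).eventually (eventually_gt_nhds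
      (show 3 * M / 4 < u x₀ t₀ by rw [hM]; linarith))
  obtain ⟨ε₁, hε₁, hball1⟩ := Metric.mem_nhdsWithin_iff.1 hc1
  -- Step 5 : first-order estimate from ux x₀ t₀ = 0
  obtain ⟨c₀, hc₀def⟩ : ∃ c₀ : ℝ, c₀ = lam * M / (16 * L) := ⟨_, rfl⟩
  have hc₀pos : 0 < c₀ := by rw [hc₀def]; positivity
  have hev0 : ∀ᶠ y in 𝓝[<] x₀, M - c₀ * (x₀ - y) ≤ u y t₀ := by
    have hslope := hasDerivAt_iff_tendsto_slope.1 hux_at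
    rw [hux0] at hslope
    have hslope' : Tendsto (slope (fun y => u y t₀) x₀) (𝓝[<] x₀) (𝓝 0) :=
      hslope.mono_left (nhdsWithin_mono _ fun y hy => ne_of_lt hy)
    filter_upwards [hslope'.eventually (eventually_lt_nhds hc₀pos), self_mem_nhdsWithin]
      with y h1 h2
    rw [slope_def_field, hM] at h1
    simp only [mem_Iio] at h2
    have hyx : y - x₀ < 0 := by linarith
    have := (div_lt_iff_of_neg hyx).1 h1
    linarith
  obtain ⟨r₂, hr₂, hest⟩ := aux_left_interval hev0
  -- Step 6 : choice of δ
  obtain ⟨δ, hδpos, hδt₀, hδε₀, h2Lδx₀, h2Lδr₂, h2Lδε₁, h2Lδε₂, hδ2Lδ⟩ :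
      ∃ δ : ℝ, 0 < δ ∧ δ ≤ t₀ / 2 ∧ δ ≤ ε₀ / 2 ∧ 2 * L * δ ≤ x₀ / 2 ∧ 2 * L * δ < r₂ ∧
        2 * L * δ < ε₁ ∧ 2 * L * δ < ε₂ ∧ δ ≤ 2 * L * δ := by
    have h4L : (0:ℝ) < 4 * L := by linarith
    obtain ⟨D, hDdef⟩ : ∃ D : ℝ, D = min (min (t₀/2) (ε₀/2))
        (min (min (ε₁/(4*L)) (ε₂/(4*L))) (min (x₀/(4*L)) (r₂/(4*L)))) := ⟨_, rfl⟩
    have hDpos : 0 < D := by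
      rw [hDdef]
      refine lt_min (lt_min (by linarith) (by linarith))
        (lt_min (lt_min ?_ ?_) (lt_min ?_ ?_)) <;> positivity
    have hb1 : D ≤ t₀/2 := by
      rw [hDdef]; exact le_trans (min_le_left _ _) (min_le_left _ _)
    have hb2 : D ≤ ε₀/2 := by
      rw [hDdef]; exact le_trans (min_le_left _ _) (min_le_right _ _)
    have hb3 : D ≤ ε₁/(4*L) := by
      rw [hDdef]; exact le_trans (min_le_right _ _) (le_trans (min_le_left _ _) (min_le_left _ _))
    have hb4 : D ≤ ε₂/(4*L) := by
      rw [hDdef]; exact le_trans (min_le_right _ _) (le_trans (min_le_left _ _) (min_le_right _ _))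
    have hb5 : D ≤ x₀/(4*L) := by
      rw [hDdef]; exact le_trans (min_le_right _ _) (le_trans (min_le_right _ _) (min_le_left _ _))
    have hb6 : D ≤ r₂/(4*L) := by
      rw [hDdef]; exact le_trans (min_le_right _ _) (le_trans (min_le_right _ _) (min_le_right _ _))
    rw [le_div_iff₀ h4L] at hb3 hb4 hb5 hb6
    refine ⟨D, hDpos, hb1, hb2, by nlinarith, by nlinarith, by nlinarith, by nlinarith, ?_⟩
    have h := mul_nonneg (show (0:ℝ) ≤ 2 * L - 1 by linarith) hDpos.le
    nlinarith
  obtain ⟨x₁, hx₁def⟩ : ∃ x₁ : ℝ, x₁ = x₀ - 2 * L * δ := ⟨_, rfl⟩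
  have hx₁pos : 0 < x₁ := by rw [hx₁def]; linarith
  have hx₁lt : x₁ < x₀ := by
    rw [hx₁def]
    have : 0 < 2 * L * δ := by positivity
    linarith
  -- the free boundary stays to the right of x₁ on the time window
  have hsx₁ : ∀ τ ∈ Icc (t₀ - δ) t₀, x₁ < s τ := by
    intro τ hτ
    have hτ0 : 0 < τ := by linarith [hτ.1]
    have hτIcc : τ ∈ Icc (0:ℝ) T := ⟨hτ0.le, le_trans hτ.2 htT⟩
    have hτtset : τ ∈ tset := by
      apply hball0
      refine ⟨?_, hτIcc⟩
      rw [mem_ball, Real.dist_eq]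
      rw [abs_lt]
      constructor <;> [linarith [hτ.1]; linarith [hτ.2]]
    have hd := hlip.dist_le_mul τ hτtset t₀ ht₀tset
    rw [Real.dist_eq, Real.dist_eq] at hd
    have habs : |τ - t₀| ≤ δ := by
      rw [abs_le]
      constructor <;> [linarith [hτ.1]; linarith [hτ.2]]
    have hKd : (K:ℝ) * |τ - t₀| ≤ (K:ℝ) * δ := mul_le_mul_of_nonneg_left habs hK0
    have h1 : s t₀ - s τ ≤ |s τ - s t₀| := by
      rw [abs_sub_comm]; exact le_abs_self _
    have h2 : (K:ℝ) * δ < 2 * L * δ := by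
      have h3 : 0 < (2 * L - (K:ℝ)) * δ := mul_pos (by rw [hLdef]; linarith) hδpos
      linarith
    rw [hx₁def]
    linarith
  -- Step 7 : ut is very negative along the segment
  have hutneg : ∀ τ ∈ Ioo (t₀ - δ) t₀, ut x₁ τ < -(lam * M / 4) := by
    intro τ hτ
    have hτmem : τ ∈ Icc (t₀ - δ) t₀ := ⟨hτ.1.le, hτ.2.le⟩
    have hτ0 : 0 < τ := by linarith [hτ.1]
    have hτT : τ < T := lt_of_lt_of_le hτ.2 htT
    have hxlt := hsx₁ τ hτmem
    have hdist : dist ((x₁, τ) : ℝ × ℝ) ((x₀, t₀) : ℝ × ℝ) ≤ 2 * L * δ := by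
      have h2Lδpos : 0 < 2 * L * δ := by positivity
      have hxx : |x₁ - x₀| ≤ 2 * L * δ := by
        rw [hx₁def, abs_le]
        constructor <;> linarith
      have htt : |τ - t₀| ≤ 2 * L * δ := by
        rw [abs_le]
        constructor <;> [linarith [hτ.1]; linarith [hτ.2]]
      simp only [Prod.dist_eq, Real.dist_eq]
      exact max_le hxx htt
    have hm2 : ((x₁, τ) : ℝ × ℝ) ∈ ball ((x₀, t₀) : ℝ × ℝ) ε₂ := by
      rw [mem_ball]
      exact lt_of_le_of_lt hdist h2Lδε₂
    have hm1 : ((x₁, τ) : ℝ × ℝ) ∈ ball ((x₀, t₀) : ℝ × ℝ) ε₁ := by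
      rw [mem_ball]
      exact lt_of_le_of_lt hdist h2Lδε₁
    have huxxb : uxx x₁ τ < lam * M / 2 :=
      hball2 ⟨hm2, hx₁pos, hxlt.le, hτ0, hτT.le⟩
    have hub : 3 * M / 4 < u x₁ τ :=
      hball1 ⟨hm1, hx₁pos.le, hxlt.le, hτ0.le, hτT.le⟩
    have hpde := hineq τ ⟨hτ0, hτT⟩ x₁ ⟨hx₁pos, hxlt⟩
    have hmul : lam * (3 * M / 4) < lam * u x₁ τ := mul_lt_mul_of_pos_left hub hlam
    linarith
  -- Step 8 : continuity of τ ↦ u x₁ τ on the window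
  have hg : ContinuousOn (fun τ => u x₁ τ) (Icc (t₀ - δ) t₀) := by
    have hmap : Continuous (fun τ : ℝ => ((x₁, τ) : ℝ × ℝ)) :=
      continuous_const.prodMk continuous_id
    apply hu_cont.comp hmap.continuousOn
    intro τ hτ
    exact ⟨hx₁pos.le, (hsx₁ τ hτ).le, by linarith [hτ.1], le_trans hτ.2 htT⟩
  -- Step 9 : mean value theorem on the window
  obtain ⟨c, hc, hceq⟩ := exists_hasDerivAt_eq_slope (fun τ => u x₁ τ) (fun τ => ut x₁ τ)
    (show t₀ - δ < t₀ by linarith) hg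
    (fun τ hτ => hut τ ⟨by linarith [hτ.1], lt_of_lt_of_le hτ.2 htT⟩ x₁
      ⟨hx₁pos, hsx₁ τ ⟨hτ.1.le, hτ.2.le⟩⟩)
  have hδeq : t₀ - (t₀ - δ) = δ := by ring
  rw [hδeq] at hceq
  have hcneg := hutneg c hc
  rw [hceq] at hcneg
  have hdiff : u x₁ t₀ - u x₁ (t₀ - δ) < -(lam * M / 4) * δ := by
    have := (div_lt_iff₀ hδpos).1 hcneg
    linarith
  -- Step 10 : lower bound for u x₁ t₀
  have hx₁est : M - c₀ * (x₀ - x₁) ≤ u x₁ t₀ := by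
    apply hest
    constructor
    · rw [hx₁def]; linarith
    · exact hx₁lt
  have hcval : c₀ * (x₀ - x₁) = lam * M * δ / 8 := by
    have hx : x₀ - x₁ = 2 * L * δ := by rw [hx₁def]; ring
    rw [hx, hc₀def]
    field_simp
    ring
  rw [hcval] at hx₁est
  -- Step 11 : contradiction
  have hub := hMub x₁ (t₀ - δ) hx₁pos.le (hsx₁ (t₀ - δ) ⟨le_refl _, by linarith⟩).le
    (by linarith) (by linarith)
  have hpos : 0 < lam * M * δ := by positivity
  linarith
end

section
/- Corner trace of the heat potential: Let φ̃ ∈ C([0,b]) and J₃(x,t) = ∫₀ᵇ [K(x,t;ξ,0) + K(−x,t;ξ,0)] φ̃(ξ) dξ with K the heat kernel. Then J₃(x,t) → φ̃(0) as (x,t) → (0,0) with 0 ≤ x, t > 0. -/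
open MeasureTheory Real Filter intervalIntegral


lemma gauss_integrable : Integrable (fun z : ℝ => Real.exp (-z^2)) := by
  have := integrable_exp_neg_mul_sq (b := 1) one_pos
  simpa using this

lemma gauss_int : ∫ z : ℝ, Real.exp (-z^2) = Real.sqrt Real.pi := by
  have := integral_gaussian 1
  simpa using this

lemma shift_scale (c x t : ℝ) (ht : 0 < t) :
    ∫ ξ in (0:ℝ)..c, Real.exp (-(ξ + x)^2 / (4*t)) =
      2*Real.sqrt t * ∫ z in (x/(2*Real.sqrt t))..((c+x)/(2*Real.sqrt t)), Real.exp (-z^2) := by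
  set s := Real.sqrt t with hs
  have hs0 : 0 < s := Real.sqrt_pos.2 ht
  have hts : t = s^2 := (Real.sq_sqrt ht.le).symm
  have key : ∀ z : ℝ, Real.exp (-(2*s*z)^2/(4*t)) = Real.exp (-z^2) := by
    intro z
    congr 1
    rw [hts]
    field_simp
    ring
  have h1 : ∫ ξ in (0:ℝ)..c, Real.exp (-(ξ + x)^2 / (4*t)) =
      ∫ u in (0+x)..(c+x), Real.exp (-u^2/(4*t)) :=
    integral_comp_add_right (fun u => Real.exp (-u^2/(4*t))) x
  have h2 := integral_comp_mul_left (a := x/(2*s)) (b := (c+x)/(2*s))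
      (fun u => Real.exp (-u^2/(4*t))) (c := 2*s) (by positivity)
  simp only [key] at h2
  have e1 : 2*s * (x/(2*s)) = x := by field_simp
  have e2 : 2*s * ((c+x)/(2*s)) = c + x := by field_simp
  rw [e1, e2, smul_eq_mul] at h2
  rw [h1, zero_add]
  rw [h2]
  field_simp

lemma kernel_cont (x t : ℝ) : Continuous (fun ξ : ℝ =>
    Real.exp (-(x - ξ)^2 / (4*t)) / (2*Real.sqrt (Real.pi*t)) +
    Real.exp (-(-x - ξ)^2 / (4*t)) / (2*Real.sqrt (Real.pi*t))) := by
  fun_prop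

lemma mass_eq (c x t : ℝ) (ht : 0 < t) :
    ∫ ξ in (0:ℝ)..c,
      (Real.exp (-(x - ξ)^2 / (4*t)) / (2*Real.sqrt (Real.pi*t)) +
       Real.exp (-(-x - ξ)^2 / (4*t)) / (2*Real.sqrt (Real.pi*t)))
    = (Real.sqrt Real.pi)⁻¹ *
      ∫ z in (-(c+x)/(2*Real.sqrt t))..((c-x)/(2*Real.sqrt t)), Real.exp (-z^2) := by
  set s := Real.sqrt t with hs
  have hs0 : 0 < s := Real.sqrt_pos.2 ht
  have hsplit : ∫ ξ in (0:ℝ)..c,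
      (Real.exp (-(x - ξ)^2 / (4*t)) / (2*Real.sqrt (Real.pi*t)) +
       Real.exp (-(-x - ξ)^2 / (4*t)) / (2*Real.sqrt (Real.pi*t)))
      = ((∫ ξ in (0:ℝ)..c, Real.exp (-(ξ + -x)^2 / (4*t))) +
         (∫ ξ in (0:ℝ)..c, Real.exp (-(ξ + x)^2 / (4*t)))) / (2*Real.sqrt (Real.pi*t)) := by
    rw [← intervalIntegral.integral_add]
    · rw [← intervalIntegral.integral_div]
      apply intervalIntegral.integral_congr
      intro ξ _
      have e1 : (ξ + -x)^2 = (x - ξ)^2 := by ring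
      have e2 : (ξ + x)^2 = (-x - ξ)^2 := by ring
      simp only [e1, e2]
      ring
    · exact (Continuous.intervalIntegrable (by fun_prop) _ _)
    · exact (Continuous.intervalIntegrable (by fun_prop) _ _)
  rw [hsplit, shift_scale c (-x) t ht, shift_scale c x t ht]
  have heven : ∫ z in (x/(2*s))..((c+x)/(2*s)), Real.exp (-z^2)
      = ∫ z in (-((c+x)/(2*s)))..(-(x/(2*s))), Real.exp (-z^2) := by
    have := integral_comp_neg (a := x/(2*s)) (b := (c+x)/(2*s)) (fun z => Real.exp (-z^2))
    simpa using this
  rw [heven]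
  have hadj : (∫ z in (-((c+x)/(2*s)))..(-(x/(2*s))), Real.exp (-z^2)) +
      (∫ z in (-(x/(2*s)))..((c + -x)/(2*s)), Real.exp (-z^2)) =
      ∫ z in (-((c+x)/(2*s)))..((c + -x)/(2*s)), Real.exp (-z^2) := by
    apply integral_add_adjacent_intervals <;>
      exact (Continuous.intervalIntegrable (by fun_prop) _ _)
  have hne : -(x/(2*s)) = (-x)/(2*s) := by ring
  rw [← hne]
  have : (2*s * ∫ z in (-(x/(2*s)))..((c + -x)/(2*s)), Real.exp (-z^2)) +
      2*s * ∫ z in (-((c+x)/(2*s)))..(-(x/(2*s))), Real.exp (-z^2)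
      = 2*s * ∫ z in (-((c+x)/(2*s)))..((c + -x)/(2*s)), Real.exp (-z^2) := by
    rw [← mul_add, ← hadj]; ring
  rw [this]
  have hpt : Real.sqrt (Real.pi * t) = Real.sqrt Real.pi * s := Real.sqrt_mul Real.pi_pos.le t
  rw [hpt]
  have h1 : -((c+x)/(2*s)) = -(c+x)/(2*s) := by ring
  have h2 : (c + -x)/(2*s) = (c-x)/(2*s) := by ring
  rw [h1, h2]
  have hπ : (0:ℝ) < Real.sqrt Real.pi := Real.sqrt_pos.2 Real.pi_pos
  field_simp

lemma gauss_interval_le (lo hi : ℝ) (h : lo ≤ hi) :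
    ∫ z in lo..hi, Real.exp (-z^2) ≤ Real.sqrt Real.pi := by
  rw [intervalIntegral.integral_of_le h, ← gauss_int]
  exact setIntegral_le_integral gauss_integrable
    (Filter.Eventually.of_forall fun z => (Real.exp_pos _).le)

lemma mass_le_one (c x t : ℝ) (hc : 0 ≤ c) (ht : 0 < t) :
    ∫ ξ in (0:ℝ)..c,
      (Real.exp (-(x - ξ)^2 / (4*t)) / (2*Real.sqrt (Real.pi*t)) +
       Real.exp (-(-x - ξ)^2 / (4*t)) / (2*Real.sqrt (Real.pi*t))) ≤ 1 := by
  rw [mass_eq c x t ht]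
  have hs0 : 0 < Real.sqrt t := Real.sqrt_pos.2 ht
  have hord : -(c+x)/(2*Real.sqrt t) ≤ (c-x)/(2*Real.sqrt t) := by
    apply div_le_div_of_nonneg_right ?_ (by positivity) |>.trans_eq rfl
    · linarith
  have hπ : (0:ℝ) < Real.sqrt Real.pi := Real.sqrt_pos.2 Real.pi_pos
  calc (Real.sqrt Real.pi)⁻¹ * ∫ z in (-(c+x)/(2*Real.sqrt t))..((c-x)/(2*Real.sqrt t)), Real.exp (-z^2)
      ≤ (Real.sqrt Real.pi)⁻¹ * Real.sqrt Real.pi := by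
        apply mul_le_mul_of_nonneg_left (gauss_interval_le _ _ hord) (by positivity)
    _ = 1 := by field_simp

lemma rem_tendsto (a : ℝ) (ha : 0 < a) :
    Filter.Tendsto (fun t : ℝ => Real.exp (-a/t) / Real.sqrt (Real.pi * t))
      (nhdsWithin 0 (Set.Ioi 0)) (nhds 0) := by
  have h1 : Filter.Tendsto (fun u : ℝ => (Real.sqrt Real.pi)⁻¹ * (u ^ (1/2:ℝ) * Real.exp (-a*u)))
      Filter.atTop (nhds 0) := by
    simpa using (tendsto_rpow_mul_exp_neg_mul_atTop_nhds_zero (1/2) a ha).const_mul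
      (Real.sqrt Real.pi)⁻¹
  have h2 : Filter.Tendsto (fun t : ℝ => t⁻¹) (nhdsWithin 0 (Set.Ioi 0)) Filter.atTop :=
    tendsto_inv_nhdsGT_zero
  apply (h1.comp h2).congr'
  filter_upwards [self_mem_nhdsWithin] with t ht
  have ht0 : (0:ℝ) < t := ht
  have hsπ : (0:ℝ) < Real.sqrt Real.pi := Real.sqrt_pos.2 Real.pi_pos
  have hst : (0:ℝ) < Real.sqrt t := Real.sqrt_pos.2 ht0
  show (Real.sqrt Real.pi)⁻¹ * ((t⁻¹) ^ (1/2:ℝ) * Real.exp (-a * t⁻¹)) = _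
  rw [Real.sqrt_mul Real.pi_pos.le, ← Real.sqrt_eq_rpow, Real.sqrt_inv]
  rw [show -a * t⁻¹ = -a/t by ring]
  field_simp

lemma main_limits (b : ℝ) (hb : 0 < b) :
    Filter.Tendsto
      (fun p : ℝ × ℝ => ∫ ξ in (0:ℝ)..b,
        (Real.exp (-(p.1 - ξ)^2 / (4 * p.2)) / (2 * Real.sqrt (Real.pi * p.2)) +
         Real.exp (-(-p.1 - ξ)^2 / (4 * p.2)) / (2 * Real.sqrt (Real.pi * p.2))))
      (nhdsWithin (0, 0) {p : ℝ × ℝ | 0 ≤ p.1 ∧ 0 < p.2})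
      (nhds 1) := by
  set l := nhdsWithin ((0:ℝ), (0:ℝ)) {p : ℝ × ℝ | 0 ≤ p.1 ∧ 0 < p.2} with hl
  have hx : Filter.Tendsto (fun p : ℝ×ℝ => p.1) l (nhds 0) :=
    (continuous_fst.tendsto _).mono_left nhdsWithin_le_nhds
  have ht' : Filter.Tendsto (fun p : ℝ×ℝ => p.2) l (nhdsWithin 0 (Set.Ioi 0)) := by
    apply tendsto_nhdsWithin_of_tendsto_nhds_of_eventually_within
    · exact (continuous_snd.tendsto _).mono_left nhdsWithin_le_nhds
    · filter_upwards [self_mem_nhdsWithin] with p hp using hp.2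
  have hsq : Filter.Tendsto (fun p : ℝ×ℝ => 2 * Real.sqrt p.2) l (nhdsWithin 0 (Set.Ioi 0)) := by
    apply tendsto_nhdsWithin_of_tendsto_nhds_of_eventually_within
    · have h := (Real.continuous_sqrt.tendsto 0).comp (ht'.mono_right nhdsWithin_le_nhds)
      simpa using (h.const_mul 2)
    · filter_upwards [self_mem_nhdsWithin] with p hp
      have : 0 < Real.sqrt p.2 := Real.sqrt_pos.2 hp.2
      show (0:ℝ) < 2 * Real.sqrt p.2
      linarith
  have hinv : Filter.Tendsto (fun p : ℝ×ℝ => (2 * Real.sqrt p.2)⁻¹) l Filter.atTop :=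
    tendsto_inv_nhdsGT_zero.comp hsq
  have hbsub : Filter.Tendsto (fun p : ℝ×ℝ => b - p.1) l (nhds b) := by
    simpa using tendsto_const_nhds.sub hx
  have hbadd : Filter.Tendsto (fun p : ℝ×ℝ => b + p.1) l (nhds b) := by
    simpa using tendsto_const_nhds.add hx
  have hhi : Filter.Tendsto (fun p : ℝ×ℝ => (b - p.1)/(2*Real.sqrt p.2)) l Filter.atTop := by
    simpa [div_eq_mul_inv] using Filter.Tendsto.pos_mul_atTop hb hbsub hinv
  have hlo : Filter.Tendsto (fun p : ℝ×ℝ => -(b + p.1)/(2*Real.sqrt p.2)) l Filter.atBot := by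
    have h := Filter.Tendsto.pos_mul_atTop hb hbadd hinv
    have h2 := Filter.tendsto_neg_atTop_atBot.comp h
    apply h2.congr
    intro p
    simp [div_eq_mul_inv]
    ring
  have hI := MeasureTheory.intervalIntegral_tendsto_integral gauss_integrable hlo hhi
  rw [gauss_int] at hI
  have hI2 := hI.const_mul (Real.sqrt Real.pi)⁻¹
  have hval : (Real.sqrt Real.pi)⁻¹ * Real.sqrt Real.pi = 1 := by
    have hsπ : (0:ℝ) < Real.sqrt Real.pi := Real.sqrt_pos.2 Real.pi_pos
    field_simp
  rw [hval] at hI2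
  apply hI2.congr'
  filter_upwards [self_mem_nhdsWithin] with p hp
  exact (mass_eq b p.1 p.2 hp.2).symm

theorem stmt_14 (b : ℝ) (φ : ℝ → ℝ) (hb : 0 < b)
    (hφ : ContinuousOn φ (Set.Icc 0 b)) :
    Filter.Tendsto
      (fun p : ℝ × ℝ => ∫ ξ in (0:ℝ)..b,
        (Real.exp (-(p.1 - ξ)^2 / (4 * p.2)) / (2 * Real.sqrt (Real.pi * p.2)) +
         Real.exp (-(-p.1 - ξ)^2 / (4 * p.2)) / (2 * Real.sqrt (Real.pi * p.2))) * φ ξ)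
      (nhdsWithin (0, 0) {p : ℝ × ℝ | 0 ≤ p.1 ∧ 0 < p.2})
      (nhds (φ 0)) := by
  set l := nhdsWithin ((0,0) : ℝ × ℝ) {p : ℝ × ℝ | 0 ≤ p.1 ∧ 0 < p.2} with hldef
  set g : ℝ × ℝ → ℝ → ℝ := fun p ξ =>
    Real.exp (-(p.1 - ξ)^2 / (4 * p.2)) / (2 * Real.sqrt (Real.pi * p.2)) +
    Real.exp (-(-p.1 - ξ)^2 / (4 * p.2)) / (2 * Real.sqrt (Real.pi * p.2)) with hgdef
  have hgcont : ∀ p : ℝ × ℝ, Continuous (g p) := fun p => kernel_cont p.1 p.2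
  have hgnn : ∀ (p : ℝ × ℝ) (ξ : ℝ), 0 ≤ g p ξ := by
    intro p ξ
    rw [hgdef]
    positivity
  have hIcc : Set.uIcc (0:ℝ) b = Set.Icc 0 b := Set.uIcc_of_le hb.le
  set E : ℝ × ℝ → ℝ := fun p => ∫ ξ in (0:ℝ)..b, g p ξ * (φ ξ - φ 0) with hEdef
  set M : ℝ × ℝ → ℝ := fun p => ∫ ξ in (0:ℝ)..b, g p ξ with hMdef
  -- integrability of pieces
  have hint : ∀ (p : ℝ × ℝ) (c d : ℝ), Set.uIcc c d ⊆ Set.Icc 0 b →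
      IntervalIntegrable (fun ξ => g p ξ * (φ ξ - φ 0)) volume c d := by
    intro p c d hsub
    apply ContinuousOn.intervalIntegrable
    exact ((hgcont p).continuousOn.mul ((hφ.mono hsub).sub continuousOn_const))
  -- decomposition
  have hdecomp : ∀ p : ℝ × ℝ, (∫ ξ in (0:ℝ)..b, g p ξ * φ ξ) = E p + φ 0 * M p := by
    intro p
    have h1 : (∫ ξ in (0:ℝ)..b, g p ξ * φ ξ)
        = ∫ ξ in (0:ℝ)..b, (g p ξ * (φ ξ - φ 0) + g p ξ * φ 0) := by
      apply intervalIntegral.integral_congr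
      intro ξ _
      ring
    rw [h1, intervalIntegral.integral_add (g := fun ξ => g p ξ * φ 0) (hint p 0 b (by rw [hIcc]))
      (((hgcont p).mul continuous_const).intervalIntegrable _ _),
      intervalIntegral.integral_mul_const]
    rw [hEdef, hMdef]
    ring
  have hmass : Filter.Tendsto M l (nhds 1) := main_limits b hb
  -- error term tends to 0
  have hx : Filter.Tendsto (fun p : ℝ × ℝ => p.1) l (nhds 0) :=
    (continuous_fst.tendsto _).mono_left nhdsWithin_le_nhds
  have ht' : Filter.Tendsto (fun p : ℝ × ℝ => p.2) l (nhdsWithin 0 (Set.Ioi 0)) := by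
    apply tendsto_nhdsWithin_of_tendsto_nhds_of_eventually_within
    · exact (continuous_snd.tendsto _).mono_left nhdsWithin_le_nhds
    · filter_upwards [self_mem_nhdsWithin] with p hp using hp.2
  have hE : Filter.Tendsto E l (nhds 0) := by
    rw [Metric.tendsto_nhds]
    intro ε hε
    simp only [Real.dist_eq, sub_zero]
    -- continuity of φ at 0
    have hc0 : ContinuousWithinAt φ (Set.Icc 0 b) 0 := hφ 0 ⟨le_refl 0, hb.le⟩
    rw [Metric.continuousWithinAt_iff] at hc0
    obtain ⟨δ, hδ0, hδ⟩ := hc0 (ε/3) (by linarith)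
    set d := min (δ/2) b with hddef
    have hd0 : 0 < d := lt_min (by linarith) hb
    have hdb : d ≤ b := min_le_right _ _
    have hsmall : ∀ ξ ∈ Set.Icc (0:ℝ) d, |φ ξ - φ 0| ≤ ε/3 := by
      intro ξ hξ
      have h1 : ξ ∈ Set.Icc 0 b := ⟨hξ.1, hξ.2.trans hdb⟩
      have h2 : dist ξ 0 < δ := by
        rw [Real.dist_eq, sub_zero, abs_of_nonneg hξ.1]
        have h3 : ξ ≤ δ/2 := hξ.2.trans (min_le_left _ _)
        linarith
      have := hδ h1 h2
      rw [Real.dist_eq] at this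
      linarith
    -- uniform bound for φ - φ 0
    obtain ⟨C, hC⟩ := (isCompact_Icc : IsCompact (Set.Icc (0:ℝ) b)).exists_bound_of_continuousOn
      (hφ.sub continuousOn_const)
    simp only [Real.norm_eq_abs] at hC
    -- remainder
    set R : ℝ × ℝ → ℝ := fun p =>
      (b - d) * (Real.exp (-(d^2/16)/p.2) / Real.sqrt (Real.pi * p.2) * C) with hRdef
    have hR : Filter.Tendsto R l (nhds 0) := by
      have h0 := (rem_tendsto (d^2/16) (by positivity)).comp ht'
      have h1 := (h0.mul_const C).const_mul (b - d)
      simpa using h1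
    have hRsmall : ∀ᶠ p in l, R p < ε/3 := hR.eventually_lt_const (by linarith)
    have hxsmall : ∀ᶠ p in l, p.1 < d/2 := hx.eventually_lt_const (by linarith)
    filter_upwards [self_mem_nhdsWithin, hxsmall, hRsmall] with p hpS hpx hpR
    obtain ⟨hx0, ht0⟩ := hpS
    have hsπt : (0:ℝ) < Real.sqrt (Real.pi * p.2) := Real.sqrt_pos.2 (by positivity)
    -- split E p
    have hint1 : IntervalIntegrable (fun ξ => g p ξ * (φ ξ - φ 0)) volume 0 d :=
      hint p 0 d (by rw [Set.uIcc_of_le hd0.le]; exact Set.Icc_subset_Icc le_rfl hdb)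
    have hint2 : IntervalIntegrable (fun ξ => g p ξ * (φ ξ - φ 0)) volume d b :=
      hint p d b (by rw [Set.uIcc_of_le hdb]; exact Set.Icc_subset_Icc hd0.le le_rfl)
    have hsplitE : E p = (∫ ξ in (0:ℝ)..d, g p ξ * (φ ξ - φ 0)) +
        ∫ ξ in d..b, g p ξ * (φ ξ - φ 0) :=
      (intervalIntegral.integral_add_adjacent_intervals hint1 hint2).symm
    -- bound 1
    have hb1 : |∫ ξ in (0:ℝ)..d, g p ξ * (φ ξ - φ 0)| ≤ ε/3 := by
      calc |∫ ξ in (0:ℝ)..d, g p ξ * (φ ξ - φ 0)|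
          ≤ ∫ ξ in (0:ℝ)..d, |g p ξ * (φ ξ - φ 0)| :=
            intervalIntegral.abs_integral_le_integral_abs hd0.le
        _ ≤ ∫ ξ in (0:ℝ)..d, g p ξ * (ε/3) := by
            apply intervalIntegral.integral_mono_on hd0.le hint1.abs
              (((hgcont p).mul continuous_const).intervalIntegrable _ _)
            intro ξ hξ
            rw [abs_mul, abs_of_nonneg (hgnn p ξ)]
            exact mul_le_mul_of_nonneg_left (hsmall ξ hξ) (hgnn p ξ)
        _ = (ε/3) * ∫ ξ in (0:ℝ)..d, g p ξ := by
            rw [intervalIntegral.integral_mul_const]; ring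
        _ ≤ (ε/3) * 1 := by
            apply mul_le_mul_of_nonneg_left (mass_le_one d p.1 p.2 hd0.le ht0) (by linarith)
        _ = ε/3 := by ring
    -- bound 2
    have hb2 : |∫ ξ in d..b, g p ξ * (φ ξ - φ 0)| ≤ R p := by
      have hpt : ∀ ξ ∈ Set.Icc d b, |g p ξ * (φ ξ - φ 0)| ≤
          Real.exp (-(d^2/16)/p.2) / Real.sqrt (Real.pi * p.2) * C := by
        intro ξ hξ
        have hgle : g p ξ ≤ Real.exp (-(d^2/16)/p.2) / Real.sqrt (Real.pi * p.2) := by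
          have h1 : d^2/4 ≤ (p.1 - ξ)^2 := by nlinarith [hξ.1, hξ.2, hx0, hpx.le]
          have h2 : d^2/4 ≤ (-p.1 - ξ)^2 := by nlinarith [hξ.1, hξ.2, hx0]
          have he1 : Real.exp (-(p.1 - ξ)^2 / (4 * p.2)) ≤ Real.exp (-(d^2/16)/p.2) := by
            apply Real.exp_le_exp.2
            rw [div_le_div_iff₀ (by positivity) ht0]
            nlinarith
          have he2 : Real.exp (-(-p.1 - ξ)^2 / (4 * p.2)) ≤ Real.exp (-(d^2/16)/p.2) := by
            apply Real.exp_le_exp.2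
            rw [div_le_div_iff₀ (by positivity) ht0]
            nlinarith
          rw [hgdef]
          calc Real.exp (-(p.1 - ξ)^2 / (4 * p.2)) / (2 * Real.sqrt (Real.pi * p.2)) +
              Real.exp (-(-p.1 - ξ)^2 / (4 * p.2)) / (2 * Real.sqrt (Real.pi * p.2))
              ≤ Real.exp (-(d^2/16)/p.2) / (2 * Real.sqrt (Real.pi * p.2)) +
                Real.exp (-(d^2/16)/p.2) / (2 * Real.sqrt (Real.pi * p.2)) := by gcongr
            _ = Real.exp (-(d^2/16)/p.2) / Real.sqrt (Real.pi * p.2) := by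
                field_simp; ring
        have hξb : ξ ∈ Set.Icc 0 b := ⟨hd0.le.trans hξ.1, hξ.2⟩
        rw [abs_mul, abs_of_nonneg (hgnn p ξ)]
        exact mul_le_mul hgle (hC ξ hξb) (abs_nonneg _) (by positivity)
      calc |∫ ξ in d..b, g p ξ * (φ ξ - φ 0)|
          ≤ ∫ ξ in d..b, |g p ξ * (φ ξ - φ 0)| :=
            intervalIntegral.abs_integral_le_integral_abs hdb
        _ ≤ ∫ _ξ in d..b, Real.exp (-(d^2/16)/p.2) / Real.sqrt (Real.pi * p.2) * C :=
            intervalIntegral.integral_mono_on hdb hint2.abs intervalIntegrable_const hpt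
        _ = (b - d) * (Real.exp (-(d^2/16)/p.2) / Real.sqrt (Real.pi * p.2) * C) := by
            rw [intervalIntegral.integral_const, smul_eq_mul]
        _ = R p := by rw [hRdef]
    calc |E p| ≤ |∫ ξ in (0:ℝ)..d, g p ξ * (φ ξ - φ 0)| + |∫ ξ in d..b, g p ξ * (φ ξ - φ 0)| := by
          rw [hsplitE]; exact abs_add_le _ _
      _ ≤ ε/3 + R p := add_le_add hb1 hb2
      _ < ε := by linarith
  have hfinal : Filter.Tendsto (fun p => E p + φ 0 * M p) l (nhds (0 + φ 0 * 1)) :=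
    hE.add (hmass.const_mul (φ 0))
  rw [show (0:ℝ) + φ 0 * 1 = φ 0 by ring] at hfinal
  exact hfinal.congr fun p => (hdecomp p).symm
end

section
/- Kernel bound along a C¹ free boundary: Let s ∈ C¹([0,T]) with 1/C₂ ≤ s(t) ≤ C₂ and |s′(t)| ≤ C₁ on [0,T]. Let N_x(x,t;ξ,τ) denote the x-derivative of N(x,t;ξ,τ) = K(x,t;ξ,τ) + K(−x,t;ξ,τ), K the heat kernel. Then for all 0 ≤ τ < t ≤ T: |N_x(s(t),t;s(τ),τ)| ≤ (C₁/2 + C₂³)/(2√(t−τ)). -/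
set_option maxHeartbeats 1000000


theorem stmt_15 (T C₁ C₂ : ℝ) (s s' : ℝ → ℝ)
    (hT : 0 < T) (hC₂ : 0 < C₂)
    (hderiv : ∀ t ∈ Set.Icc (0:ℝ) T, HasDerivAt s (s' t) t)
    (hs'cont : ContinuousOn s' (Set.Icc 0 T))
    (hs'bd : ∀ t ∈ Set.Icc (0:ℝ) T, |s' t| ≤ C₁)
    (hsbd : ∀ t ∈ Set.Icc (0:ℝ) T, 1 / C₂ ≤ s t ∧ s t ≤ C₂) :
    ∀ t τ : ℝ, 0 ≤ τ → τ < t → t ≤ T →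
      |(-((s t - s τ) / (4 * Real.sqrt Real.pi * (t - τ) ^ ((3:ℝ)/2))) *
          Real.exp (-(s t - s τ)^2 / (4 * (t - τ))) +
        -((s t + s τ) / (4 * Real.sqrt Real.pi * (t - τ) ^ ((3:ℝ)/2))) *
          Real.exp (-(s t + s τ)^2 / (4 * (t - τ))))|
        ≤ (C₁ / 2 + C₂^3) / (2 * Real.sqrt (t - τ)) := by
  intro t τ hτ0 hτt htT
  have hτI : τ ∈ Set.Icc (0:ℝ) T := ⟨hτ0, hτt.le.trans htT⟩
  have htI : t ∈ Set.Icc (0:ℝ) T := ⟨hτ0.trans hτt.le, htT⟩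
  have hC₁ : 0 ≤ C₁ := (abs_nonneg _).trans (hs'bd τ hτI)
  set d := t - τ with hd_def
  have hd : 0 < d := sub_pos.mpr hτt
  have hsqd : 0 < Real.sqrt d := Real.sqrt_pos.mpr hd
  have hsq : Real.sqrt d * Real.sqrt d = d := Real.mul_self_sqrt hd.le
  have hπ : (1:ℝ) ≤ Real.sqrt Real.pi := by
    rw [show (1:ℝ) = Real.sqrt 1 by simp]
    exact Real.sqrt_le_sqrt (by linarith [Real.pi_gt_three])
  have hsqπ : (0:ℝ) < Real.sqrt Real.pi := lt_of_lt_of_le one_pos hπ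
  have hd32 : d ^ ((3:ℝ)/2) = d * Real.sqrt d := by
    rw [show (3:ℝ)/2 = 1 + 1/2 by norm_num, Real.rpow_add hd, Real.rpow_one,
      ← Real.sqrt_eq_rpow]
  set D : ℝ := 4 * Real.sqrt Real.pi * d ^ ((3:ℝ)/2) with hD_def
  have hD : D = 4 * Real.sqrt Real.pi * (d * Real.sqrt d) := by rw [hD_def, hd32]
  have hDpos : 0 < D := by rw [hD]; positivity
  -- MVT bound
  have hA : |s t - s τ| ≤ C₁ * d := by
    have hsub : Set.Icc τ t ⊆ Set.Icc 0 T := Set.Icc_subset_Icc hτ0 htT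
    have := (convex_Icc τ t).norm_image_sub_le_of_norm_hasDerivWithin_le
      (f := s) (f' := s')
      (fun x hx => (hderiv x (hsub hx)).hasDerivWithinAt)
      (fun x hx => hs'bd x (hsub hx))
      (Set.left_mem_Icc.mpr hτt.le) (Set.right_mem_Icc.mpr hτt.le)
    have habs : |t - τ| = d := abs_of_pos hd
    simpa [Real.norm_eq_abs, habs] using this
  have hst := hsbd t htI
  have hsτ := hsbd τ hτI
  have hCinv : (0:ℝ) < 1 / C₂ := by positivity
  have hBpos : 0 < s t + s τ := by linarith [hst.1, hsτ.1]
  have hBub : s t + s τ ≤ 2 * C₂ := by linarith [hst.2, hsτ.2]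
  have hBlb : 2 / C₂ ≤ s t + s τ := by
    have h1 := hst.1; have h2 := hsτ.1
    rw [div_le_iff₀ hC₂] at h1 h2 ⊢; linarith
  -- exponential bounds
  have hE1 : Real.exp (-(s t - s τ)^2 / (4 * d)) ≤ 1 := by
    apply Real.exp_le_one_iff.mpr
    apply div_nonpos_of_nonpos_of_nonneg
    · nlinarith [sq_nonneg (s t - s τ)]
    · linarith
  have hE2 : Real.exp (-(s t + s τ)^2 / (4 * d)) ≤ C₂^2 * d := by
    have hstep : -(s t + s τ)^2 / (4 * d) ≤ -(1 / (C₂^2 * d)) := by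
      rw [div_le_iff₀ (by linarith : (0:ℝ) < 4 * d)]
      have hB2 : 4 / C₂^2 ≤ (s t + s τ)^2 := by
        have h4 : (2 / C₂)^2 = 4 / C₂^2 := by ring
        calc 4 / C₂^2 = (2 / C₂)^2 := h4.symm
          _ ≤ (s t + s τ)^2 := by
              apply pow_le_pow_left₀ (by positivity) hBlb
      have hkey : (1 / (C₂^2 * d)) * (4 * d) = 4 / C₂^2 := by
        field_simp
      nlinarith
    calc Real.exp (-(s t + s τ)^2 / (4 * d))
        ≤ Real.exp (-(1 / (C₂^2 * d))) := Real.exp_le_exp.mpr hstep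
      _ ≤ C₂^2 * d := by
          rw [Real.exp_neg, inv_le_comm₀ (Real.exp_pos _) (by positivity)]
          calc (C₂^2 * d)⁻¹ = 1 / (C₂^2 * d) := (one_div _).symm
            _ ≤ Real.exp (1 / (C₂^2 * d)) := by
                linarith [Real.add_one_le_exp (1 / (C₂^2 * d))]
  -- triangle inequality and per-term bounds
  calc |(-((s t - s τ) / D) * Real.exp (-(s t - s τ)^2 / (4 * d)) +
        -((s t + s τ) / D) * Real.exp (-(s t + s τ)^2 / (4 * d)))|
      ≤ |(-((s t - s τ) / D) * Real.exp (-(s t - s τ)^2 / (4 * d)))| +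
        |(-((s t + s τ) / D) * Real.exp (-(s t + s τ)^2 / (4 * d)))| := abs_add_le _ _
    _ = |s t - s τ| / D * Real.exp (-(s t - s τ)^2 / (4 * d)) +
        (s t + s τ) / D * Real.exp (-(s t + s τ)^2 / (4 * d)) := by
        rw [abs_mul, abs_mul, abs_neg, abs_neg, abs_div, abs_div,
          abs_of_pos hDpos, abs_of_pos hBpos,
          abs_of_pos (Real.exp_pos _), abs_of_pos (Real.exp_pos _)]
    _ ≤ (C₁ * d) / D * 1 + (2 * C₂) / D * (C₂^2 * d) := by
        gcongr
    _ ≤ (C₁ / 2 + C₂^3) / (2 * Real.sqrt d) := by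
        rw [hD, mul_one]
        have heq : C₁ * d / (4 * Real.sqrt Real.pi * (d * Real.sqrt d)) +
            2 * C₂ / (4 * Real.sqrt Real.pi * (d * Real.sqrt d)) * (C₂^2 * d)
            = (C₁ + 2 * C₂^3) / (4 * Real.sqrt Real.pi * Real.sqrt d) := by
          field_simp
        rw [heq, div_le_div_iff₀ (by positivity) (by positivity)]
        have hnn : 0 ≤ (C₁ + 2 * C₂^3) * (Real.sqrt d * (Real.sqrt Real.pi - 1)) := by
          apply mul_nonneg (by positivity)
          exact mul_nonneg hsqd.le (by linarith)
        nlinarith [hnn]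
end

section
/- C² regularity of the free boundary: Let (u, s) be a classical solution of Problem P on [0,∞) (so u_t = u_{xx} − λu for 0 < x < s(t), s′(t) = ∫₀^{s(t)}(u(x,t) − σ̃)dx, u_x(s(t),t) = 0, and u_t is continuous up to the boundary for t > 0). Then s ∈ C²((0,∞)) and s″(t) = [u(s(t),t) − σ̃ − λ]·s′(t) − u_x(0,t) − λσ̃·s(t). -/
open MeasureTheory Set Filter Topology

/-- Chain rule along a curve, assuming only existence of the partial x-derivative in a
neighborhood (jointly continuous at the point) and the partial t-derivative at the point. -/
lemma curve_chain {u ux : ℝ → ℝ → ℝ} {c : ℝ → ℝ} {c' d₀ t₀ : ℝ}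
    (hc : HasDerivAt c c' t₀)
    (hux : ∀ᶠ p : ℝ × ℝ in 𝓝 (c t₀, t₀), HasDerivAt (fun x => u x p.2) (ux p.1 p.2) p.1)
    (huxc : ContinuousAt (fun p : ℝ × ℝ => ux p.1 p.2) (c t₀, t₀))
    (hut : HasDerivAt (fun τ => u (c t₀) τ) d₀ t₀) :
    HasDerivAt (fun τ => u (c τ) τ) (ux (c t₀) t₀ * c' + d₀) t₀ := by
  set x₀ := c t₀
  set U₀ := ux x₀ t₀ with hU₀
  have key : HasDerivAt (fun τ => u (c τ) τ - u x₀ τ) (U₀ * c') t₀ := by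
    rw [hasDerivAt_iff_isLittleO]
    have h1 : (fun τ => c τ - c t₀ - (τ - t₀) • c') =o[𝓝 t₀] fun τ => τ - t₀ :=
      hasDerivAt_iff_isLittleO.1 hc
    have h2 : (fun τ => u (c τ) τ - u x₀ τ - U₀ * (c τ - c t₀)) =o[𝓝 t₀] fun τ => τ - t₀ := by
      have hbig : (fun τ => c τ - c t₀) =O[𝓝 t₀] fun τ => τ - t₀ := hc.isBigO_sub
      refine (Asymptotics.IsLittleO.trans_isBigO ?_ hbig)
      rw [Asymptotics.isLittleO_iff]
      intro ε hε
      have hclose : ∀ᶠ p : ℝ × ℝ in 𝓝 (x₀, t₀), ‖ux p.1 p.2 - U₀‖ ≤ ε := by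
        have : Tendsto (fun p : ℝ × ℝ => ux p.1 p.2) (𝓝 (x₀, t₀)) (𝓝 U₀) := huxc
        filter_upwards [this (Metric.closedBall_mem_nhds U₀ hε)] with p hp
        simpa [Metric.mem_closedBall, dist_eq_norm] using hp
      obtain ⟨ρ, hρ, hball⟩ := Metric.eventually_nhds_iff_ball.1 (hux.and hclose)
      have hc_cont : ContinuousAt c t₀ := hc.continuousAt
      have hev1 : ∀ᶠ τ in 𝓝 t₀, c τ ∈ Metric.ball x₀ ρ :=
        hc_cont (Metric.ball_mem_nhds x₀ hρ)
      have hev2 : ∀ᶠ τ in 𝓝 t₀, dist τ t₀ < ρ := by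
        have : Metric.ball t₀ ρ ∈ 𝓝 t₀ := Metric.ball_mem_nhds t₀ hρ
        filter_upwards [this] with τ hτ using hτ
      filter_upwards [hev1, hev2] with τ hτ1 hτ2
      have hsub : ∀ x ∈ Metric.ball x₀ ρ, (x, τ) ∈ Metric.ball ((x₀, t₀) : ℝ × ℝ) ρ := by
        intro x hx
        rw [Metric.mem_ball, Prod.dist_eq]
        exact max_lt (Metric.mem_ball.1 hx) hτ2
      have hmvt := Convex.norm_image_sub_le_of_norm_hasDerivWithin_le
        (f := fun x => u x τ - U₀ * x) (f' := fun x => ux x τ - U₀)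
        (s := Metric.ball x₀ ρ) (C := ε)
        (fun x hx => by
          have h := (hball _ (hsub x hx)).1
          exact ((h.sub ((hasDerivAt_id x).const_mul U₀)).hasDerivWithinAt).congr_deriv
            (by ring))
        (fun x hx => (hball _ (hsub x hx)).2)
        (convex_ball x₀ ρ) (Metric.mem_ball_self hρ) hτ1
      have : u (c τ) τ - U₀ * c τ - (u x₀ τ - U₀ * x₀) = u (c τ) τ - u x₀ τ - U₀ * (c τ - c t₀) := by
        ring
      calc ‖u (c τ) τ - u x₀ τ - U₀ * (c τ - c t₀)‖
          = ‖(fun x => u x τ - U₀ * x) (c τ) - (fun x => u x τ - U₀ * x) x₀‖ := by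
            rw [← this]
        _ ≤ ε * ‖c τ - x₀‖ := hmvt
        _ = ε * ‖c τ - c t₀‖ := rfl
    have hsum := (h1.const_mul_left U₀).add h2
    have heq : (fun τ => u (c τ) τ - u x₀ τ - (u (c t₀) t₀ - u x₀ t₀) - (τ - t₀) • (U₀ * c'))
        = (fun τ => U₀ * (c τ - c t₀ - (τ - t₀) • c') + (u (c τ) τ - u x₀ τ - U₀ * (c τ - c t₀))) := by
      funext τ; have hx : c t₀ = x₀ := rfl; rw [hx]; simp only [smul_eq_mul]; ring
    rw [heq]; exact hsum
  exact (key.add hut).congr_of_eventuallyEq (Filter.Eventually.of_forall fun τ => by simp only [Pi.add_apply]; ring)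

/-- C² regularity of the free boundary for Problem P on `[0,∞)`. -/
theorem stmt_17 (lam σ b : ℝ) (s s' : ℝ → ℝ) (u ux uxx ut : ℝ → ℝ → ℝ)
    (hlam : 0 < lam) (hσ : 0 < σ) (hb : 0 < b) (hs0 : s 0 = b)
    (hspos : ∀ t : ℝ, 0 ≤ t → 0 < s t)
    (hsderiv : ∀ t : ℝ, 0 ≤ t → HasDerivAt s (s' t) t)
    (hs'cont : ContinuousOn s' (Set.Ici 0))
    (hu_cont : ContinuousOn (fun p : ℝ × ℝ => u p.1 p.2)
      {p : ℝ × ℝ | 0 ≤ p.1 ∧ p.1 ≤ s p.2 ∧ 0 ≤ p.2})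
    (hux : ∀ t : ℝ, 0 < t → ∀ x : ℝ, 0 ≤ x → x ≤ s t →
      HasDerivAt (fun y => u y t) (ux x t) x)
    (hux_cont : ContinuousOn (fun p : ℝ × ℝ => ux p.1 p.2)
      {p : ℝ × ℝ | 0 ≤ p.1 ∧ p.1 ≤ s p.2 ∧ 0 < p.2})
    (huxx : ∀ t : ℝ, 0 < t → ∀ x : ℝ, 0 < x → x < s t →
      HasDerivAt (fun y => ux y t) (uxx x t) x)
    (hut : ∀ t : ℝ, 0 < t → ∀ x : ℝ, 0 < x → x < s t →
      HasDerivAt (fun τ => u x τ) (ut x t) t)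
    -- u_t is continuous up to the boundary for t > 0
    (hut_cont : ContinuousOn (fun p : ℝ × ℝ => ut p.1 p.2)
      {p : ℝ × ℝ | 0 ≤ p.1 ∧ p.1 ≤ s p.2 ∧ 0 < p.2})
    (heq : ∀ t : ℝ, 0 < t → ∀ x : ℝ, 0 < x → x < s t →
      ut x t = uxx x t - lam * u x t)
    (hNeu : ∀ t : ℝ, 0 < t → ux (s t) t = 0)
    (hfb : ∀ t : ℝ, 0 ≤ t → s' t = ∫ x in (0:ℝ)..s t, (u x t - σ)) :
    (∀ t : ℝ, 0 < t →
      HasDerivAt s' ((u (s t) t - σ - lam) * s' t - ux 0 t - lam * σ * s t) t) ∧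
    ContinuousOn (fun t => (u (s t) t - σ - lam) * s' t - ux 0 t - lam * σ * s t)
      (Set.Ioi 0) := by
  have hscont : ∀ t : ℝ, 0 ≤ t → ContinuousAt s t := fun t ht => (hsderiv t ht).continuousAt
  -- continuity of the integrand family
  have hFcont : ∀ τ : ℝ, 0 < τ → ContinuousOn (fun y => u (s τ * y) τ) (Icc 0 1) := by
    intro τ hτ
    refine hu_cont.comp ((continuous_const.mul continuous_id).prodMk continuous_const).continuousOn
      (fun y hy => ?_)
    exact ⟨mul_nonneg (hspos τ hτ.le).le hy.1,
      by simpa using mul_le_of_le_one_right (hspos τ hτ.le).le hy.2, hτ.le⟩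
  have hucont1 : ∀ τ : ℝ, 0 ≤ τ → ContinuousOn (fun x => u x τ) (Icc 0 (s τ)) := by
    intro τ hτ
    refine hu_cont.comp (continuous_id.prodMk continuous_const).continuousOn (fun x hx => ?_)
    exact ⟨hx.1, hx.2, hτ⟩
  -- change of variables identity
  have hCoV : ∀ τ : ℝ, 0 ≤ τ → s τ * (∫ y in (0:ℝ)..1, u (s τ * y) τ) = ∫ x in (0:ℝ)..s τ, u x τ := by
    intro τ hτ
    have := intervalIntegral.smul_integral_comp_mul_left (a := (0:ℝ)) (b := 1)
      (f := fun x => u x τ) (s τ)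
    simpa [smul_eq_mul] using this
  -- the free boundary identity rewritten
  have hG : ∀ τ : ℝ, 0 ≤ τ → s' τ = s τ * (∫ y in (0:ℝ)..1, u (s τ * y) τ) - σ * s τ := by
    intro τ hτ
    have hint : IntervalIntegrable (fun x => u x τ) volume 0 (s τ) :=
      ((hucont1 τ hτ).mono (by rw [uIcc_of_le (hspos τ hτ).le])).intervalIntegrable
    have := hfb τ hτ
    rw [intervalIntegral.integral_sub hint intervalIntegrable_const,
      intervalIntegral.integral_const] at this
    rw [hCoV τ hτ, this]
    simp [smul_eq_mul]
    ring
  constructor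
  · -- the hard part: differentiability
    intro t₀ ht₀
    have hs₀ : 0 < s t₀ := hspos t₀ ht₀.le
    set a : ℝ := t₀ / 2 with ha
    set bb : ℝ := 3 * t₀ / 2 with hbb
    have hab : a ≤ bb := by rw [ha, hbb]; linarith
    have ha0 : 0 < a := by rw [ha]; linarith
    have ht₀mem : t₀ ∈ Icc a bb := by constructor <;> [rw [ha]; rw [hbb]] <;> linarith
    have hball_sub : ∀ τ ∈ Metric.ball t₀ (t₀ / 2), τ ∈ Icc a bb ∧ 0 < τ := by
      intro τ hτ
      rw [Metric.mem_ball, Real.dist_eq, abs_lt] at hτ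
      refine ⟨⟨by rw [ha]; linarith, by rw [hbb]; linarith⟩, by linarith⟩
    -- the compact set containing all relevant points
    set φ : ℝ × ℝ → ℝ × ℝ := fun p => (s p.2 * p.1, p.2) with hφ
    have hφcont : ContinuousOn φ (Icc 0 1 ×ˢ Icc a bb) := by
      intro p hp
      have : ContinuousAt φ p := by
        have hsp : ContinuousAt (fun q : ℝ × ℝ => s q.2) p :=
          (hscont p.2 (le_trans ha0.le hp.2.1)).comp continuousAt_snd
        exact (hsp.mul continuousAt_fst).prodMk continuousAt_snd
      exact this.continuousWithinAt
    set K : Set (ℝ × ℝ) := φ '' (Icc 0 1 ×ˢ Icc a bb) with hK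
    have hKcomp : IsCompact K := (isCompact_Icc.prod isCompact_Icc).image_of_continuousOn hφcont
    have hKsub : K ⊆ {p : ℝ × ℝ | 0 ≤ p.1 ∧ p.1 ≤ s p.2 ∧ 0 < p.2} := by
      rintro _ ⟨⟨y, τ⟩, ⟨hy, hτ⟩, rfl⟩
      have hsτ : 0 < s τ := hspos τ (le_trans ha0.le hτ.1)
      exact ⟨mul_nonneg hsτ.le hy.1, by simpa using mul_le_of_le_one_right hsτ.le hy.2,
        lt_of_lt_of_le ha0 hτ.1⟩
    obtain ⟨C₁, hC₁⟩ := hKcomp.exists_bound_of_continuousOn (hux_cont.mono hKsub)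
    obtain ⟨C₂, hC₂⟩ := hKcomp.exists_bound_of_continuousOn (hut_cont.mono hKsub)
    obtain ⟨C₃, hC₃⟩ := isCompact_Icc.exists_bound_of_continuousOn
      (hs'cont.mono (fun τ (hτ : τ ∈ Icc a bb) => le_trans ha0.le hτ.1))
    have hmemK : ∀ (y τ : ℝ), y ∈ Icc (0:ℝ) 1 → τ ∈ Icc a bb → (s τ * y, τ) ∈ K := by
      intro y τ hy hτ
      exact ⟨(y, τ), ⟨hy, hτ⟩, rfl⟩
    have hC₁0 : 0 ≤ C₁ := le_trans (norm_nonneg _) (hC₁ _ (hmemK 0 t₀ (by norm_num) ht₀mem))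
    have hC₃0 : 0 ≤ C₃ := le_trans (norm_nonneg _) (hC₃ t₀ ht₀mem)
    -- the parametric integrand and its t-derivative
    set F : ℝ → ℝ → ℝ := fun τ y => u (s τ * y) τ with hF
    set F' : ℝ → ℝ → ℝ := fun τ y => ux (s τ * y) τ * (s' τ * y) + ut (s τ * y) τ with hF'
    have hI01 : (Set.uIoc (0:ℝ) 1) = Ioc 0 1 := uIoc_of_le zero_le_one
    have hF_meas : ∀ᶠ τ in 𝓝 t₀, AEStronglyMeasurable (F τ) (volume.restrict (Set.uIoc (0:ℝ) 1)) := by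
      filter_upwards [eventually_gt_nhds ht₀] with τ hτ
      rw [hI01]
      exact (((hFcont τ hτ).mono Ioc_subset_Icc_self).aestronglyMeasurable measurableSet_Ioc)
    have hF_int : IntervalIntegrable (F t₀) volume 0 1 :=
      ((hFcont t₀ ht₀).mono (by rw [uIcc_of_le zero_le_one])).intervalIntegrable
    have hF'cont : ContinuousOn (F' t₀) (Icc 0 1) := by
      have hmap : ContinuousOn (fun y => ((s t₀ * y, t₀) : ℝ × ℝ)) (Icc 0 1) :=
        ((continuous_const.mul continuous_id).prodMk continuous_const).continuousOn
      have hmapsTo : ∀ y ∈ Icc (0:ℝ) 1, ((s t₀ * y, t₀) : ℝ × ℝ) ∈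
          {p : ℝ × ℝ | 0 ≤ p.1 ∧ p.1 ≤ s p.2 ∧ 0 < p.2} := by
        intro y hy
        exact ⟨mul_nonneg hs₀.le hy.1, by simpa using mul_le_of_le_one_right hs₀.le hy.2, ht₀⟩
      have h1 : ContinuousOn (fun y => ux (s t₀ * y) t₀) (Icc 0 1) :=
        hux_cont.comp hmap hmapsTo
      have h2 : ContinuousOn (fun y => ut (s t₀ * y) t₀) (Icc 0 1) :=
        hut_cont.comp hmap hmapsTo
      exact (h1.mul (continuousOn_const.mul continuousOn_id)).add h2
    have hF'_meas : AEStronglyMeasurable (F' t₀) (volume.restrict (Set.uIoc (0:ℝ) 1)) := by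
      rw [hI01]
      exact (hF'cont.mono Ioc_subset_Icc_self).aestronglyMeasurable measurableSet_Ioc
    have h_bound : ∀ᵐ y ∂(volume : Measure ℝ), y ∈ Set.uIoc (0:ℝ) 1 →
        ∀ τ ∈ Metric.ball t₀ (t₀ / 2), ‖F' τ y‖ ≤ C₁ * C₃ + C₂ := by
      refine ae_of_all _ (fun y hy τ hτ => ?_)
      rw [hI01] at hy
      obtain ⟨hτab, hτ0⟩ := hball_sub τ hτ
      have hyI : y ∈ Icc (0:ℝ) 1 := ⟨hy.1.le, hy.2⟩
      have hKmem := hmemK y τ hyI hτab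
      have b1 : ‖ux (s τ * y) τ‖ ≤ C₁ := hC₁ _ hKmem
      have b2 : ‖ut (s τ * y) τ‖ ≤ C₂ := hC₂ _ hKmem
      have b3 : ‖s' τ‖ ≤ C₃ := hC₃ τ hτab
      have : ‖ux (s τ * y) τ * (s' τ * y)‖ ≤ C₁ * C₃ := by
        rw [norm_mul, norm_mul]
        calc ‖ux (s τ * y) τ‖ * (‖s' τ‖ * ‖y‖) ≤ C₁ * (C₃ * 1) := by
              apply mul_le_mul b1 _ (by positivity) hC₁0
              exact mul_le_mul b3 (by rw [Real.norm_eq_abs, abs_le]; exact ⟨by linarith [hy.1], hy.2⟩)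
                (norm_nonneg _) hC₃0
          _ = C₁ * C₃ := by ring
      calc ‖F' τ y‖ ≤ ‖ux (s τ * y) τ * (s' τ * y)‖ + ‖ut (s τ * y) τ‖ := norm_add_le _ _
        _ ≤ C₁ * C₃ + C₂ := add_le_add this b2
    have h_diff : ∀ᵐ y ∂(volume : Measure ℝ), y ∈ Set.uIoc (0:ℝ) 1 →
        ∀ τ ∈ Metric.ball t₀ (t₀ / 2), HasDerivAt (fun τ => F τ y) (F' τ y) τ := by
      have hae : ∀ᵐ y : ℝ ∂(volume : Measure ℝ), y ≠ 1 := by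
        simp only [ae_iff, not_not]
        exact measure_singleton _
      filter_upwards [hae] with y hy1 hyI τ hτ
      rw [hI01] at hyI
      have hy0 : 0 < y := hyI.1
      have hylt : y < 1 := lt_of_le_of_ne hyI.2 hy1
      obtain ⟨hτab, hτ0⟩ := hball_sub τ hτ
      have hsτ : 0 < s τ := hspos τ hτ0.le
      have hcy : 0 < s τ * y := mul_pos hsτ hy0
      have hcylt : s τ * y < s τ := by nlinarith
      -- apply the curve chain rule
      have hc : HasDerivAt (fun τ => s τ * y) (s' τ * y) τ := (hsderiv τ hτ0.le).mul_const y
      have hev : ∀ᶠ p : ℝ × ℝ in 𝓝 ((s τ * y, τ) : ℝ × ℝ),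
          0 < p.1 ∧ p.1 < s p.2 ∧ 0 < p.2 := by
        have e1 : ∀ᶠ p : ℝ × ℝ in 𝓝 ((s τ * y, τ) : ℝ × ℝ), 0 < p.1 :=
          continuousAt_const.eventually_lt continuousAt_fst hcy
        have e2 : ∀ᶠ p : ℝ × ℝ in 𝓝 ((s τ * y, τ) : ℝ × ℝ), p.1 < s p.2 :=
          continuousAt_fst.eventually_lt ((hscont τ hτ0.le).comp continuousAt_snd) hcylt
        have e3 : ∀ᶠ p : ℝ × ℝ in 𝓝 ((s τ * y, τ) : ℝ × ℝ), 0 < p.2 :=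
          continuousAt_const.eventually_lt continuousAt_snd hτ0
        filter_upwards [e1, e2, e3] with p h1 h2 h3 using ⟨h1, h2, h3⟩
      have huxev : ∀ᶠ p : ℝ × ℝ in 𝓝 ((s τ * y, τ) : ℝ × ℝ),
          HasDerivAt (fun x => u x p.2) (ux p.1 p.2) p.1 := by
        filter_upwards [hev] with p hp
        exact hux p.2 hp.2.2 p.1 hp.1.le hp.2.1.le
      have hmemnhds : {p : ℝ × ℝ | 0 ≤ p.1 ∧ p.1 ≤ s p.2 ∧ 0 < p.2} ∈
          𝓝 ((s τ * y, τ) : ℝ × ℝ) :=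
        Filter.mem_of_superset hev (fun p hp => ⟨hp.1.le, hp.2.1.le, hp.2.2⟩)
      have huxc : ContinuousAt (fun p : ℝ × ℝ => ux p.1 p.2) ((s τ * y, τ) : ℝ × ℝ) :=
        hux_cont.continuousAt hmemnhds
      have hutc : HasDerivAt (fun τ' => u (s τ * y) τ') (ut (s τ * y) τ) τ :=
        hut τ hτ0 (s τ * y) hcy hcylt
      exact curve_chain hc huxev huxc hutc
    obtain ⟨-, hLeib⟩ := intervalIntegral.hasDerivAt_integral_of_dominated_loc_of_deriv_le
      (F := F) (F' := F') (x₀ := t₀) (a := 0) (b := 1) (bound := fun _ => C₁ * C₃ + C₂)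
      (Metric.ball_mem_nhds _ (half_pos ht₀)) hF_meas hF_int hF'_meas h_bound intervalIntegrable_const h_diff
    -- the derivative of s'
    set IF : ℝ := ∫ y in (0:ℝ)..1, F t₀ y with hIF
    set IF' : ℝ := ∫ y in (0:ℝ)..1, F' t₀ y with hIF'
    have hGd : HasDerivAt (fun τ => s τ * (∫ y in (0:ℝ)..1, F τ y) - σ * s τ)
        (s' t₀ * IF + s t₀ * IF' - σ * s' t₀) t₀ :=
      ((hsderiv t₀ ht₀.le).mul hLeib).sub ((hsderiv t₀ ht₀.le).const_mul σ)
    have hs'd : HasDerivAt s' (s' t₀ * IF + s t₀ * IF' - σ * s' t₀) t₀ := by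
      refine hGd.congr_of_eventuallyEq ?_
      filter_upwards [eventually_gt_nhds ht₀] with τ hτ using hG τ hτ.le
    -- now evaluate the derivative
    set Ju : ℝ := ∫ x in (0:ℝ)..s t₀, u x t₀ with hJu
    have hIFval : s t₀ * IF = Ju := hCoV t₀ ht₀.le
    have hJuval : Ju = s' t₀ + σ * s t₀ := by
      have := hG t₀ ht₀.le
      rw [← hIF, hIFval] at this
      linarith
    -- change of variables for IF'
    have hIF'val : s t₀ * IF' =
        ∫ x in (0:ℝ)..s t₀, (ux x t₀ * (s' t₀ * (x / s t₀)) + ut x t₀) := by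
      have hcv := intervalIntegral.smul_integral_comp_mul_left (a := (0:ℝ)) (b := 1)
        (f := fun x => ux x t₀ * (s' t₀ * (x / s t₀)) + ut x t₀) (s t₀)
      have heqf : ∀ y : ℝ, ux (s t₀ * y) t₀ * (s' t₀ * (s t₀ * y / s t₀)) + ut (s t₀ * y) t₀
          = F' t₀ y := by
        intro y
        rw [mul_div_cancel_left₀ _ hs₀.ne']
      simp only [heqf, smul_eq_mul, mul_zero, mul_one] at hcv
      rw [hIF']
      exact hcv
    -- integrability facts at time t₀
    have huxcont1 : ContinuousOn (fun x => ux x t₀) (Icc 0 (s t₀)) := by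
      refine hux_cont.comp (continuous_id.prodMk continuous_const).continuousOn (fun x hx => ?_)
      exact ⟨hx.1, hx.2, ht₀⟩
    have hutcont1 : ContinuousOn (fun x => ut x t₀) (Icc 0 (s t₀)) := by
      refine hut_cont.comp (continuous_id.prodMk continuous_const).continuousOn (fun x hx => ?_)
      exact ⟨hx.1, hx.2, ht₀⟩
    have hIcc : uIcc (0:ℝ) (s t₀) = Icc 0 (s t₀) := uIcc_of_le hs₀.le
    have hu_ii : IntervalIntegrable (fun x => u x t₀) volume 0 (s t₀) :=
      ((hucont1 t₀ ht₀.le).mono (by rw [hIcc])).intervalIntegrable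
    have hxux_ii : IntervalIntegrable (fun x => x * ux x t₀) volume 0 (s t₀) :=
      ((continuousOn_id.mul huxcont1).mono (by rw [hIcc])).intervalIntegrable
    have hut_ii : IntervalIntegrable (fun x => ut x t₀) volume 0 (s t₀) :=
      (hutcont1.mono (by rw [hIcc])).intervalIntegrable
    -- split IF'
    set A : ℝ := ∫ x in (0:ℝ)..s t₀, x * ux x t₀ with hA
    set B : ℝ := ∫ x in (0:ℝ)..s t₀, ut x t₀ with hB
    have hsplit : s t₀ * IF' = s' t₀ / s t₀ * A + B := by
      rw [hIF'val]
      have : ∀ x : ℝ, ux x t₀ * (s' t₀ * (x / s t₀)) + ut x t₀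
          = s' t₀ / s t₀ * (x * ux x t₀) + ut x t₀ := by intro x; ring
      simp only [this]
      rw [intervalIntegral.integral_add (hxux_ii.const_mul _) hut_ii,
        intervalIntegral.integral_const_mul]
    -- integration by parts for A
    have hAval : A = s t₀ * u (s t₀) t₀ - Ju := by
      have hftc : ∫ x in (0:ℝ)..s t₀, (u x t₀ + x * ux x t₀)
          = s t₀ * u (s t₀) t₀ - 0 * u 0 t₀ := by
        refine intervalIntegral.integral_eq_sub_of_hasDerivAt
          (f := fun x => x * u x t₀) (fun x hx => ?_) (hu_ii.add hxux_ii)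
        rw [hIcc] at hx
        have := (hasDerivAt_id' x).fun_mul (hux t₀ ht₀ x hx.1 hx.2)
        simpa using this
      rw [intervalIntegral.integral_add hu_ii hxux_ii] at hftc
      rw [← hJu, ← hA] at hftc
      linarith
    -- evaluate B using the PDE and the FTC
    have huxx_ii : IntervalIntegrable (fun x => uxx x t₀) volume 0 (s t₀) := by
      have hg_ii : IntervalIntegrable (fun x => ut x t₀ + lam * u x t₀) volume 0 (s t₀) :=
        hut_ii.add (hu_ii.const_mul _)
      rw [intervalIntegrable_iff_integrableOn_Ioc_of_le hs₀.le] at hg_ii ⊢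
      refine hg_ii.congr_fun_ae ?_
      rw [Filter.EventuallyEq, ae_restrict_iff' measurableSet_Ioc]
      have hane : ∀ᵐ x : ℝ ∂(volume : Measure ℝ), x ≠ s t₀ := by
        simp only [ae_iff, not_not]; exact measure_singleton _
      filter_upwards [hane] with x hxne hx
      have hxlt : x < s t₀ := lt_of_le_of_ne hx.2 hxne
      rw [heq t₀ ht₀ x hx.1 hxlt]; ring
    have hBval : B = -ux 0 t₀ - lam * Ju := by
      have hcongr : B = ∫ x in (0:ℝ)..s t₀, (uxx x t₀ - lam * u x t₀) := by
        refine intervalIntegral.integral_congr_ae ?_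
        have hane : ∀ᵐ x : ℝ ∂(volume : Measure ℝ), x ≠ s t₀ := by
          simp only [ae_iff, not_not]; exact measure_singleton _
        filter_upwards [hane] with x hxne hx
        rw [(uIoc_of_le hs₀.le : Set.uIoc (0:ℝ) (s t₀) = Ioc 0 (s t₀))] at hx
        exact heq t₀ ht₀ x hx.1 (lt_of_le_of_ne hx.2 hxne)
      have hftc : ∫ x in (0:ℝ)..s t₀, uxx x t₀ = ux (s t₀) t₀ - ux 0 t₀ := by
        refine intervalIntegral.integral_eq_sub_of_hasDeriv_right_of_le hs₀.le huxcont1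
          (fun x hx => (huxx t₀ ht₀ x hx.1 hx.2).hasDerivWithinAt) huxx_ii
      rw [hcongr, intervalIntegral.integral_sub huxx_ii (hu_ii.const_mul _), hftc,
        intervalIntegral.integral_const_mul, hNeu t₀ ht₀, ← hJu]
      ring
    -- final algebra
    have htarget : s' t₀ * IF + s t₀ * IF' - σ * s' t₀
        = (u (s t₀) t₀ - σ - lam) * s' t₀ - ux 0 t₀ - lam * σ * s t₀ := by
      have hIFv : IF = Ju / s t₀ := by
        field_simp
        linarith [hIFval]
      rw [hIFv, hsplit, hAval, hBval, hJuval]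
      field_simp
      ring
    rw [← htarget]
    exact hs'd
  · -- continuity of the right-hand side
    have hmap : ∀ t ∈ Ioi (0:ℝ), ContinuousAt (fun t => ((s t, t) : ℝ × ℝ)) t :=
      fun t ht => (hscont t (le_of_lt ht)).prodMk continuousAt_id
    have c1 : ContinuousOn (fun t => u (s t) t) (Ioi 0) := by
      refine hu_cont.comp (continuousOn_of_forall_continuousAt hmap) (fun t ht => ?_)
      exact ⟨(hspos t (le_of_lt ht)).le, le_rfl, le_of_lt ht⟩
    have c3 : ContinuousOn (fun t => ux 0 t) (Ioi 0) := by
      refine hux_cont.comp ((continuous_const.prodMk continuous_id).continuousOn) (fun t ht => ?_)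
      exact ⟨le_rfl, (hspos t (le_of_lt ht)).le, ht⟩
    have c4 : ContinuousOn s (Ioi 0) :=
      continuousOn_of_forall_continuousAt (fun t ht => hscont t (le_of_lt ht))
    exact (((c1.sub continuousOn_const).sub continuousOn_const).mul
      (hs'cont.mono Ioi_subset_Ici_self)).sub c3 |>.sub (continuousOn_const.mul c4)
end
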